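/- Let k be an algebraically closed field of characteristic ≠ 2, let V be a k-vector space of dimension 2n+1 with a nondegenerate symmetric bilinear form B, and let S, T : V → V be two endomorphisms that are both skew self-adjoint with respect to B (B(Tv,w) = −B(v,Tw) and B(Sv,w) = −B(v,Sw) for all v,w). If S and T have the same characteristic polynomial and this polynomial is separable, then there exists g ∈ GL(V) with det(g) = 1 and B(gv,gw) = B(v,w) for all v,w ∈ V, such that S = g T g⁻¹. -/

import Mathlib

open Polynomial Matrix in
lemma aux_charpoly_eval {m : Type*} [Fintype m] [DecidableEq m] {k : Type*} [Field k]
    (A : Matrix m m k) (μ : k) : A.charpoly.eval μ = (Matrix.scalar m μ - A).det := by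
  have : (Polynomial.evalRingHom μ) A.charpoly
      = ((Polynomial.evalRingHom μ).mapMatrix (charmatrix A)).det := by
    rw [Matrix.charpoly, ← RingHom.map_det]
  rw [show A.charpoly.eval μ = (Polynomial.evalRingHom μ) A.charpoly from rfl, this]
  congr 1
  ext i j
  by_cases h : i = j <;>
  simp [h, charmatrix_apply, Matrix.scalar, Matrix.diagonal, Matrix.map_apply]

lemma aux_charpoly_eval_lin {k V : Type*} [Field k] [AddCommGroup V] [Module k V]
    [FiniteDimensional k V] (f : V →ₗ[k] V) (μ : k) :
    (LinearMap.charpoly f).eval μ = LinearMap.det (μ • (1 : V →ₗ[k] V) - f) := by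
  classical
  let b := Module.finBasis k V
  rw [← LinearMap.charpoly_toMatrix f b, aux_charpoly_eval, ← LinearMap.det_toMatrix b]
  congr 1
  rw [map_sub, map_smul, LinearMap.toMatrix_one]
  congr 1
  ext i j
  by_cases h : i = j <;> simp [h, Matrix.scalar, Matrix.diagonal]

lemma aux_exists_eigenvector {k V : Type*} [Field k] [AddCommGroup V] [Module k V]
    [FiniteDimensional k V] (f : V →ₗ[k] V) (μ : k) (h : (LinearMap.charpoly f).IsRoot μ) :
    ∃ v : V, v ≠ 0 ∧ f v = μ • v := by
  have hdet : LinearMap.det (μ • (1 : V →ₗ[k] V) - f) = 0 := by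
    rw [← aux_charpoly_eval_lin]; exact h
  have hker := LinearMap.bot_lt_ker_of_det_eq_zero hdet
  obtain ⟨v, hv, hv0⟩ := (Submodule.ne_bot_iff _).mp (bot_lt_iff_ne_bot.mp hker)
  refine ⟨v, hv0, ?_⟩
  have := LinearMap.mem_ker.mp hv
  simp only [LinearMap.sub_apply, LinearMap.smul_apply, Module.End.one_apply] at this
  rw [sub_eq_zero] at this; exact this.symm

open LinearMap in
lemma aux_det_skew_zero {k V : Type*} [Field k] [AddCommGroup V] [Module k V]
    [FiniteDimensional k V] (hchar : (2 : k) ≠ 0) (hodd : Odd (Module.finrank k V))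
    (B : LinearMap.BilinForm k V) (hnd : B.Nondegenerate)
    (T : V →ₗ[k] V) (hT : ∀ v w : V, B (T v) w = - B v (T w)) :
    LinearMap.det T = 0 := by
  classical
  let b := Module.finBasis k V
  set M := LinearMap.BilinForm.toMatrix b B with hM
  set A := LinearMap.toMatrix b b T with hA
  have hcomp : B.compLeft T = - (B.compRight T) := by
    ext v w
    simp [LinearMap.BilinForm.compLeft, LinearMap.BilinForm.compRight, LinearMap.BilinForm.comp,
      hT v w]
  have hmat : A.transpose * M = -(M * A) := by
    have h1 := LinearMap.BilinForm.toMatrix_compLeft b B T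
    have h2 := LinearMap.BilinForm.toMatrix_compRight b B T
    have h3 : (LinearMap.BilinForm.toMatrix b) (B.compLeft T) = -(M * A) := by
      have : B.compLeft T + B.compRight T = 0 := by rw [hcomp]; abel
      have h4 : (LinearMap.BilinForm.toMatrix b) (B.compLeft T) + (LinearMap.BilinForm.toMatrix b) (B.compRight T)
          = 0 := by rw [← map_add, this, map_zero]
      rw [h2] at h4
      linear_combination (norm := abel) h4
    rw [h3] at h1
    exact h1.symm
  have hdetM : M.det ≠ 0 := by
    have := hnd.toMatrix b
    exact Matrix.nondegenerate_iff_det_ne_zero.mp this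
  have hdets : A.det * M.det = - (A.det * M.det) := by
    have := congrArg Matrix.det hmat
    rw [Matrix.det_mul, Matrix.det_transpose, Matrix.det_neg, Matrix.det_mul] at this
    rw [Fintype.card_fin, hodd.neg_one_pow] at this
    linear_combination this
  have : (2 : k) * (A.det * M.det) = 0 := by linear_combination hdets
  have hAdet : A.det = 0 := by
    rcases mul_eq_zero.mp this with h | h
    · exact absurd h hchar
    · rcases mul_eq_zero.mp h with h | h
      · exact h
      · exact absurd h hdetM
  rw [← LinearMap.det_toMatrix b T]
  exact hAdet

lemma aux_bilin_eq {k V : Type*} [Field k] [AddCommGroup V] [Module k V] {ι : Type*}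
    (b : Module.Basis ι k V) (Φ Ψ : LinearMap.BilinForm k V)
    (h : ∀ i j, Φ (b i) (b j) = Ψ (b i) (b j)) : ∀ x y, Φ x y = Ψ x y := by
  have : Φ = Ψ := b.ext fun i => b.ext fun j => h i j
  intro x y; rw [this]


theorem skew_self_adjoint_conjugate_over_alg_closed {k V : Type*} [Field k] [IsAlgClosed k]
    (hchar : (2 : k) ≠ 0) [AddCommGroup V] [Module k V] [FiniteDimensional k V]
    (n : ℕ) (hn : 1 ≤ n) (hdim : Module.finrank k V = 2 * n + 1)
    (B : LinearMap.BilinForm k V) (hsymm : ∀ v w : V, B v w = B w v)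
    (hnd : ∀ v : V, (∀ w : V, B v w = 0) → v = 0)
    (S T : V →ₗ[k] V)
    (hS : ∀ v w : V, B (S v) w = - B v (S w))
    (hT : ∀ v w : V, B (T v) w = - B v (T w))
    (hchareq : LinearMap.charpoly S = LinearMap.charpoly T)
    (hsep : (LinearMap.charpoly T).Separable) :
    ∃ g : V ≃ₗ[k] V, LinearMap.det g.toLinearMap = 1 ∧
      (∀ v w : V, B (g v) (g w) = B v w) ∧
      ∀ v : V, S v = g (T (g.symm v)) := by
  classical
  set P := LinearMap.charpoly T with hPdef
  have hmonic : P.Monic := LinearMap.charpoly_monic T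
  have hP0 : P ≠ 0 := hmonic.ne_zero
  have hdeg : P.natDegree = 2 * n + 1 := by
    rw [hPdef, LinearMap.charpoly_natDegree, hdim]
  set Λ : Finset k := P.roots.toFinset with hΛdef
  have hnodup : P.roots.Nodup := Polynomial.nodup_roots hsep
  have hsplits : P.Splits := IsAlgClosed.splits P
  have hroots_card : Multiset.card P.roots = 2 * n + 1 := by
    rw [(Polynomial.splits_iff_card_roots).mp hsplits, hdeg]
  have hΛcard : Λ.card = 2 * n + 1 := by
    rw [hΛdef, Multiset.toFinset_card_of_nodup hnodup, hroots_card]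
  have hΛroot : ∀ l ∈ Λ, P.IsRoot l := by
    intro l hl
    rw [hΛdef, Multiset.mem_toFinset, Polynomial.mem_roots hP0] at hl
    exact hl
  -- eigenvectors of T and S
  have hexT : ∀ l : Λ, ∃ v : V, v ≠ 0 ∧ T v = (l : k) • v := fun l =>
    aux_exists_eigenvector T l (hΛroot l l.2)
  have hexS : ∀ l : Λ, ∃ v : V, v ≠ 0 ∧ S v = (l : k) • v := fun l =>
    aux_exists_eigenvector S l (by rw [hchareq]; exact hΛroot l l.2)
  choose t ht0 htT using hexT
  choose s hs0 hsS using hexS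
  have hliT : LinearIndependent k t :=
    Module.End.eigenvectors_linearIndependent' (T : Module.End k V) (fun l : Λ => (l : k))
      Subtype.coe_injective t
      (fun l => ⟨Module.End.mem_eigenspace_iff.mpr (htT l), ht0 l⟩)
  have hliS : LinearIndependent k s :=
    Module.End.eigenvectors_linearIndependent' (S : Module.End k V) (fun l : Λ => (l : k))
      Subtype.coe_injective s
      (fun l => ⟨Module.End.mem_eigenspace_iff.mpr (hsS l), hs0 l⟩)
  haveI : Nonempty Λ := by
    rw [Finset.nonempty_coe_sort]
    exact Finset.card_pos.mp (by omega)
  have hcardT : Fintype.card Λ = Module.finrank k V := by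
    rw [Fintype.card_coe, hΛcard, hdim]
  set bT : Module.Basis Λ k V := basisOfLinearIndependentOfCardEqFinrank hliT hcardT with hbTdef
  set bS : Module.Basis Λ k V := basisOfLinearIndependentOfCardEqFinrank hliS hcardT with hbSdef
  have hbT : ∀ l, bT l = t l := fun l =>
    congrFun (coe_basisOfLinearIndependentOfCardEqFinrank hliT hcardT) l
  have hbS : ∀ l, bS l = s l := fun l =>
    congrFun (coe_basisOfLinearIndependentOfCardEqFinrank hliS hcardT) l
  -- the intertwiner h
  set h : V ≃ₗ[k] V := bT.equiv bS (Equiv.refl Λ) with hhdef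
  have hht : ∀ l, h (t l) = s l := by
    intro l
    rw [← hbT, ← hbS, hhdef]
    exact bT.equiv_apply l bS (Equiv.refl Λ)
  have hhT : ∀ x, h (T x) = S (h x) := by
    have : (h.toLinearMap ∘ₗ T) = (S ∘ₗ h.toLinearMap) := by
      apply bT.ext
      intro l
      simp only [LinearMap.comp_apply, LinearEquiv.coe_coe]
      rw [hbT, htT, map_smul, hht, hsS]
    intro x
    exact congrFun (congrArg (fun f => f.toFun) this) x
  -- span lemma : eigenvectors of T span eigenspaces
  have hspan : ∀ (l : Λ) (x : V), T x = (l : k) • x → ∃ a : k, x = a • t l := by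
    intro l x hx
    have hrep : ∑ i : Λ, bT.repr x i • t i = x := by
      conv_rhs => rw [← bT.sum_repr x]
      exact Finset.sum_congr rfl fun i _ => by rw [hbT]
    have hz : ∑ i : Λ, (((i : k) - (l : k)) * bT.repr x i) • t i = 0 := by
      have e1 : T x = ∑ i : Λ, ((i : k) * bT.repr x i) • t i := by
        conv_lhs => rw [← hrep]
        rw [map_sum]
        exact Finset.sum_congr rfl fun i _ => by
          rw [map_smul, htT, smul_smul, mul_comm]
      have e2 : (l : k) • x = ∑ i : Λ, ((l : k) * bT.repr x i) • t i := by
        conv_lhs => rw [← hrep]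
        rw [Finset.smul_sum]
        exact Finset.sum_congr rfl fun i _ => by rw [smul_smul]
      have : ∑ i : Λ, (((i : k) - (l : k)) * bT.repr x i) • t i
          = T x - (l : k) • x := by
        rw [e1, e2, ← Finset.sum_sub_distrib]
        exact Finset.sum_congr rfl fun i _ => by rw [← sub_smul]; ring_nf
      rw [this, hx, sub_self]
    have hcoef := Fintype.linearIndependent_iff.mp hliT _ hz
    refine ⟨bT.repr x l, ?_⟩
    have hsum : ∑ i : Λ, bT.repr x i • t i = bT.repr x l • t l := by
      refine Finset.sum_eq_single l ?_ ?_
      · intro i _ hil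
        have hne : (i : k) - (l : k) ≠ 0 := by
          intro hzz
          exact hil (Subtype.ext (sub_eq_zero.mp hzz))
        have h5 := hcoef i
        have h6 : bT.repr x i = 0 := by
          rcases mul_eq_zero.mp h5 with hh | hh
          · exact absurd hh hne
          · exact hh
        rw [h6, zero_smul]
      · intro habs
        exact absurd (Finset.mem_univ l) habs
    conv_lhs => rw [← hrep]
    exact hsum
  -- the positivity operator c = h* h
  have hndB : B.Nondegenerate :=
    (LinearMap.IsRefl.nondegenerate_iff_separatingLeft (fun x y hxy => by rw [hsymm]; exact hxy)).mpr hnd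
  set toD := B.toDual hndB with htoD
  set c : V →ₗ[k] V :=
    toD.symm.toLinearMap ∘ₗ (B.compl₁₂ h.toLinearMap h.toLinearMap) with hcdef
  have hc : ∀ x y, B (c x) y = B (h x) (h y) := by
    intro x y
    have : toD (c x) = (B.compl₁₂ h.toLinearMap h.toLinearMap) x := by
      rw [hcdef]
      simp only [LinearMap.comp_apply, LinearEquiv.coe_coe]
      exact toD.apply_symm_apply _
    have h2 := congrFun (congrArg (fun f => f.toFun) this) y
    simp only [LinearMap.toFun_eq_coe, LinearMap.compl₁₂_apply, LinearEquiv.coe_coe] at h2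
    rw [← LinearMap.BilinForm.toDual_def hndB]
    exact h2
  have hcT : ∀ x, c (T x) = T (c x) := by
    intro x
    have key : ∀ w, B (c (T x) - T (c x)) w = 0 := by
      intro w
      rw [map_sub, LinearMap.sub_apply]
      have e1 : B (c (T x)) w = - B (h x) (h (T w)) := by
        rw [hc, hhT, hS, hhT]
      have e2 : B (T (c x)) w = - B (c x) (T w) := hT _ _
      rw [e1, e2, hc]
      ring
    exact sub_eq_zero.mp (hnd _ key)
  have hcsa : ∀ x y, B (c x) y = B x (c y) := by
    intro x y
    rw [hc, hsymm, ← hc, hsymm]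
  -- c acts on eigenvectors by scalars
  have hcev : ∀ l : Λ, ∃ a : k, c (t l) = a • t l := by
    intro l
    have : T (c (t l)) = (l : k) • (c (t l)) := by
      rw [← hcT, htT, map_smul]
    obtain ⟨a, ha⟩ := hspan l (c (t l)) this
    exact ⟨a, ha⟩
  choose a ha using hcev
  have ha0 : ∀ l, a l ≠ 0 := by
    intro l hl
    have hz : c (t l) = 0 := by rw [ha, hl, zero_smul]
    have : ∀ w, B (h (t l)) w = 0 := by
      intro w
      obtain ⟨y, rfl⟩ : ∃ y, h y = w := ⟨h.symm w, h.apply_symm_apply w⟩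
      rw [← hc, hz, map_zero, LinearMap.zero_apply]
    have := hnd _ this
    exact ht0 l (by simpa using this)
  -- a square root function
  have hsqex : ∀ x : k, ∃ y : k, y * y = x := by
    intro x
    obtain ⟨y, hy⟩ := IsAlgClosed.exists_pow_nat_eq x (n := 2) (by norm_num)
    exact ⟨y, by rw [← hy]; ring⟩
  choose sq hsq using hsqex
  have hsq0 : ∀ l, sq (a l) ≠ 0 := by
    intro l hl
    exact ha0 l (by rw [← hsq (a l), hl, mul_zero])
  -- the square root d of c
  set d : V →ₗ[k] V := bT.constr k (fun l => sq (a l) • t l) with hddef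
  set dinv : V →ₗ[k] V := bT.constr k (fun l => (sq (a l))⁻¹ • t l) with hdinvdef
  have hd : ∀ l, d (t l) = sq (a l) • t l := by
    intro l; rw [← hbT, hddef, bT.constr_basis, hbT]
  have hdinv : ∀ l, dinv (t l) = (sq (a l))⁻¹ • t l := by
    intro l; rw [← hbT, hdinvdef, bT.constr_basis, hbT]
  have hddinv : d ∘ₗ dinv = LinearMap.id := by
    apply bT.ext; intro l
    rw [LinearMap.comp_apply, hbT, hdinv, map_smul, hd, LinearMap.id_apply, smul_smul,
      inv_mul_cancel₀ (hsq0 l), one_smul]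
  have hdinvd : dinv ∘ₗ d = LinearMap.id := by
    apply bT.ext; intro l
    rw [LinearMap.comp_apply, hbT, hd, map_smul, hdinv, LinearMap.id_apply, smul_smul,
      mul_inv_cancel₀ (hsq0 l), one_smul]
  set de : V ≃ₗ[k] V := LinearEquiv.ofLinear d dinv hddinv hdinvd with hdedef
  have hdT : ∀ x, d (T x) = T (d x) := by
    have : (d ∘ₗ T) = (T ∘ₗ d) := by
      apply bT.ext; intro l
      simp only [LinearMap.comp_apply]
      rw [hbT, htT, map_smul, hd, map_smul, htT, smul_comm]
    intro x; exact congrFun (congrArg (fun f => f.toFun) this) x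
  have haeq : ∀ l m : Λ, B (t l) (t m) ≠ 0 → a l = a m := by
    intro l m hne
    have h1 : B (c (t l)) (t m) = a l * B (t l) (t m) := by rw [ha]; simp [smul_eq_mul]
    have h2 : B (t l) (c (t m)) = a m * B (t l) (t m) := by
      rw [ha]; rw [map_smul]; simp [smul_eq_mul]
    have := hcsa (t l) (t m)
    rw [h1, h2] at this
    exact mul_right_cancel₀ hne this
  have hdsa : ∀ x y, B (d x) y = B x (d y) := by
    have := aux_bilin_eq bT (B.compl₁₂ d LinearMap.id) (B.compl₁₂ LinearMap.id d) ?_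
    · intro x y
      have h2 := this x y
      simpa using h2
    · intro i j
      simp only [LinearMap.compl₁₂_apply, LinearMap.id_apply]
      rw [hbT, hbT, hd, hd]
      by_cases hz : B (t i) (t j) = 0
      · simp [smul_eq_mul, hz]
      · rw [haeq i j hz]
        simp [smul_eq_mul]
  have hd2 : ∀ x, d (d x) = c x := by
    have : (d ∘ₗ d) = c := by
      apply bT.ext; intro l
      rw [LinearMap.comp_apply, hbT, hd, map_smul, hd, ha, smul_smul, hsq]
    intro x; exact congrFun (congrArg (fun f => f.toFun) this) x
  -- the candidate isometry
  set g₀ : V ≃ₗ[k] V := de.symm.trans h with hg₀def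
  have hg₀ : ∀ x, g₀ x = h (dinv x) := fun x => rfl
  have hg₀symm : ∀ x, g₀.symm x = d (h.symm x) := fun x => rfl
  have hg₀B : ∀ v w, B (g₀ v) (g₀ w) = B v w := by
    intro v w
    rw [hg₀, hg₀, ← hc]
    have h1 : c (dinv v) = d v := by
      rw [← hd2]
      congr 1
      exact congrFun (congrArg (fun f => f.toFun) hddinv) v
    rw [h1, hdsa]
    congr 1
    exact congrFun (congrArg (fun f => f.toFun) hddinv) w
  have hg₀T : ∀ v, S v = g₀ (T (g₀.symm v)) := by
    intro v
    rw [hg₀symm, hg₀, ← hdT]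
    have h1 : dinv (d (T (h.symm v))) = T (h.symm v) :=
      congrFun (congrArg (fun f => f.toFun) hdinvd) _
    rw [h1, hhT, h.apply_symm_apply]
  -- determinant of g₀ is ±1
  have hdet2sq : ∀ (e : V ≃ₗ[k] V), (∀ v w, B (e v) (e w) = B v w) →
      LinearMap.det e.toLinearMap = 1 ∨ LinearMap.det e.toLinearMap = -1 := by
    intro e he
    have hcompB : B.comp e.toLinearMap e.toLinearMap = B := by
      ext v w
      simp only [LinearMap.BilinForm.comp_apply, LinearEquiv.coe_coe]
      exact he v w
    have hmat := congrArg (LinearMap.BilinForm.toMatrix bT) hcompB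
    rw [BilinForm.toMatrix_comp bT bT] at hmat
    have hdets := congrArg Matrix.det hmat
    rw [Matrix.det_mul, Matrix.det_mul, Matrix.det_transpose] at hdets
    set G := LinearMap.toMatrix bT bT e.toLinearMap with hG
    set M := LinearMap.BilinForm.toMatrix bT B with hM
    have hdetM : M.det ≠ 0 := Matrix.nondegenerate_iff_det_ne_zero.mp (hndB.toMatrix bT)
    have hsq1 : G.det * G.det = 1 := by
      have h7 : (G.det * G.det - 1) * M.det = 0 := by linear_combination hdets
      rcases mul_eq_zero.mp h7 with hh | hh
      · exact sub_eq_zero.mp hh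
      · exact absurd hh hdetM
    have hGdet : G.det = LinearMap.det e.toLinearMap := LinearMap.det_toMatrix bT _
    rw [hGdet] at hsq1
    rcases mul_eq_zero.mp (show (LinearMap.det e.toLinearMap - 1) *
        (LinearMap.det e.toLinearMap + 1) = 0 by linear_combination hsq1) with hh | hh
    · exact Or.inl (sub_eq_zero.mp hh)
    · exact Or.inr (eq_neg_of_add_eq_zero_left hh)
  have hdet2 : LinearMap.det g₀.toLinearMap = 1 ∨ LinearMap.det g₀.toLinearMap = -1 :=
    hdet2sq g₀ hg₀B
  rcases hdet2 with hdet1 | hdetm1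
  · exact ⟨g₀, hdet1, hg₀B, hg₀T⟩
  -- sign correction
  · have hodd : Odd (Module.finrank k V) := by rw [hdim]; exact ⟨n, by ring⟩
    have hdetT : LinearMap.det T = 0 := aux_det_skew_zero hchar hodd B hndB T hT
    have h0root : P.IsRoot 0 := by
      have : P.eval 0 = LinearMap.det ((0 : k) • (1 : V →ₗ[k] V) - T) := by
        rw [hPdef]; exact aux_charpoly_eval_lin T 0
      rw [Polynomial.IsRoot, this]
      have hz : (0 : k) • (1 : V →ₗ[k] V) - T = (-1 : k) • T := by
        rw [zero_smul, zero_sub, neg_smul, one_smul]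
      rw [hz, LinearMap.det_smul, hdetT, mul_zero]
    have h0Λ : (0 : k) ∈ Λ := by
      rw [hΛdef, Multiset.mem_toFinset, Polynomial.mem_roots hP0]
      exact h0root
    set l₀ : Λ := ⟨0, h0Λ⟩ with hl₀
    set ε : Λ → k := fun l => if l = l₀ then -1 else 1 with hε
    have hε2 : ∀ l, ε l * ε l = 1 := by
      intro l; rw [hε]; by_cases hl : l = l₀ <;> simp [hl]
    set ρ : V →ₗ[k] V := bT.constr k (fun l => ε l • t l) with hρdef
    have hρ : ∀ l, ρ (t l) = ε l • t l := by
      intro l; rw [← hbT, hρdef, bT.constr_basis, hbT]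
    have hρρ : ρ ∘ₗ ρ = LinearMap.id := by
      apply bT.ext; intro l
      rw [LinearMap.comp_apply, hbT, hρ, map_smul, hρ, LinearMap.id_apply, smul_smul, hε2,
        one_smul]
    set ρe : V ≃ₗ[k] V := LinearEquiv.ofLinear ρ ρ hρρ hρρ with hρedef
    have hρT : ∀ x, ρ (T x) = T (ρ x) := by
      have : (ρ ∘ₗ T) = (T ∘ₗ ρ) := by
        apply bT.ext; intro l
        simp only [LinearMap.comp_apply]
        rw [hbT, htT, map_smul, hρ, map_smul, htT, smul_comm]
      intro x; exact congrFun (congrArg (fun f => f.toFun) this) x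
    have horth : ∀ l m : Λ, B (t l) (t m) ≠ 0 → (l : k) + (m : k) = 0 := by
      intro l m hne
      have h1 : B (T (t l)) (t m) = (l : k) * B (t l) (t m) := by
        rw [htT]; simp [smul_eq_mul]
      have h2 : B (t l) (T (t m)) = (m : k) * B (t l) (t m) := by
        rw [htT, map_smul]; simp [smul_eq_mul]
      have h3 := hT (t l) (t m)
      rw [h1, h2] at h3
      have h4 : ((l : k) + (m : k)) * B (t l) (t m) = 0 := by linear_combination h3
      rcases mul_eq_zero.mp h4 with hh | hh
      · exact hh
      · exact absurd hh hne
    have hεeq : ∀ l m : Λ, B (t l) (t m) ≠ 0 → ε l = ε m := by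
      intro l m hne
      have hsum := horth l m hne
      have hiff : (l = l₀) ↔ (m = l₀) := by
        constructor
        · intro hl; apply Subtype.ext
          have h9 : (l : k) = 0 := by rw [hl]
          rw [show ((l₀ : Λ) : k) = 0 from rfl]
          linear_combination hsum - h9
        · intro hm; apply Subtype.ext
          have h9 : (m : k) = 0 := by rw [hm]
          rw [show ((l₀ : Λ) : k) = 0 from rfl]
          linear_combination hsum - h9
      by_cases hl : l = l₀
      · simp [hε, hl, hiff.mp hl]
      · have hm : ¬ (m = l₀) := fun hm => hl (hiff.mpr hm)
        simp [hε, hl, hm]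
    have hρsa : ∀ x y, B (ρ x) y = B x (ρ y) := by
      have := aux_bilin_eq bT (B.compl₁₂ ρ LinearMap.id) (B.compl₁₂ LinearMap.id ρ) ?_
      · intro x y
        have h2 := this x y
        simpa using h2
      · intro i j
        simp only [LinearMap.compl₁₂_apply, LinearMap.id_apply]
        rw [hbT, hbT, hρ, hρ]
        by_cases hz : B (t i) (t j) = 0
        · simp [smul_eq_mul, hz]
        · rw [hεeq i j hz]
          simp [smul_eq_mul]
    have hρB : ∀ x y, B (ρ x) (ρ y) = B x y := by
      intro x y
      rw [hρsa]
      congr 1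
      exact congrFun (congrArg (fun f => f.toFun) hρρ) y
    have hρmat : LinearMap.toMatrix bT bT ρ = Matrix.diagonal ε := by
      ext i j
      rw [LinearMap.toMatrix_apply, hbT, hρ, ← hbT, map_smul]
      by_cases hij : i = j
      · subst hij
        simp [Matrix.diagonal_apply_eq, Module.Basis.repr_self, Finsupp.smul_apply,
          Finsupp.single_apply]
      · simp [Matrix.diagonal_apply_ne _ hij, Module.Basis.repr_self, Finsupp.smul_apply,
          Finsupp.single_apply, Ne.symm hij]
    have hρdet : LinearMap.det ρ = -1 := by
      rw [← LinearMap.det_toMatrix bT, hρmat, Matrix.det_diagonal]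
      have : ∏ l : Λ, ε l = ∏ l : Λ, (if l = l₀ then (-1 : k) else 1) := by rfl
      rw [this, Finset.prod_ite_eq' Finset.univ l₀ (fun _ => (-1 : k)),
        if_pos (Finset.mem_univ l₀)]
    refine ⟨ρe.trans g₀, ?_, ?_, ?_⟩
    · have hcoe : (ρe.trans g₀).toLinearMap = g₀.toLinearMap ∘ₗ ρ := rfl
      rw [hcoe, LinearMap.det_comp, hdetm1, hρdet]
      ring
    · intro v w
      have : (ρe.trans g₀) v = g₀ (ρ v) := rfl
      rw [this, show (ρe.trans g₀) w = g₀ (ρ w) from rfl, hg₀B, hρB]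
    · intro v
      have h1 : (ρe.trans g₀).symm v = ρ (g₀.symm v) := rfl
      rw [h1]
      have h2 : (ρe.trans g₀) (T (ρ (g₀.symm v))) = g₀ (ρ (T (ρ (g₀.symm v)))) := rfl
      have h3 : ρ (ρ (T (g₀.symm v))) = T (g₀.symm v) :=
        congrFun (congrArg (fun f => f.toFun) hρρ) _
      rw [h2, congrArg ρ (hρT (g₀.symm v)).symm, h3]
      exact hg₀T v
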